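/- Let G be a triangle-free graph containing a facial 4-cycle v1v2v3v4 with all four vertices of degree exactly 3 (an octagram). Then every proper 3-coloring of G − {v1, v2, v3, v4} extends to a proper 3-coloring of G. -/

import Mathlib

/-- `l` lists the vertices of a cycle of `G` in cyclic order. -/
def IsCycleList {V : Type} (G : SimpleGraph V) (l : List V) : Prop :=
  3 ≤ l.length ∧ l.Nodup ∧ l.Chain' G.Adj ∧
    ∀ h : l ≠ [], G.Adj (l.getLast h) (l.head h)

/-- The edges of the cycle whose vertices are listed (in cyclic order) by `l`. -/
def cycleEdges {V : Type} (l : List V) : List (Sym2 V) :=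
  (l.zip (l.rotate 1)).map fun p => s(p.1, p.2)

/-- A combinatorial model of a finite simple graph drawn in the plane, together with its
faces.  `bounds f l` says that the cycle listed by `l` bounds the face `f`; `vinc v f` says
that the vertex `v` is incident with the face `f`; `inside l` is the set of vertices of the
graph lying in the open disk bounded by the cycle listed by `l`.  Euler's formula and the
face handshake identity are part of the data. -/
structure PlaneGraph (V : Type) [Fintype V] [DecidableEq V] where
  graph : SimpleGraph V
  Face : Type
  [fintypeFace : Fintype Face]
  [decEqFace : DecidableEq Face]
  outer : Face
  len : Face → ℕ
  bounds : Face → List V → Prop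
  vinc : V → Face → Prop
  inside : List V → Set V
  euler : (Fintype.card V : ℤ) - graph.edgeSet.ncard + Fintype.card Face
      = 1 + Nat.card graph.ConnectedComponent
  handshake : (∑ f : Face, (len f : ℤ)) = 2 * graph.edgeSet.ncard
  bounds_isCycle : ∀ f l, bounds f l → IsCycleList graph l
  bounds_len : ∀ f l, bounds f l → len f = l.length
  bounds_rotate : ∀ f l, bounds f l → bounds f (l.rotate 1)
  bounds_reverse : ∀ f l, bounds f l → bounds f l.reverse
  vinc_ncard_le : ∀ f, Set.ncard {v | vinc v f} ≤ len f
  mem_bounds_vinc : ∀ f l v, bounds f l → v ∈ l → vinc v f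

attribute [instance] PlaneGraph.fintypeFace PlaneGraph.decEqFace

namespace PlaneGraph

variable {V : Type} [Fintype V] [DecidableEq V]

/-- The degree of a vertex. -/
noncomputable def deg (P : PlaneGraph V) (v : V) : ℕ := (P.graph.neighborSet v).ncard

/-- The list `l` is a facial cycle (in cyclic order). -/
def IsFacial (P : PlaneGraph V) (l : List V) : Prop := ∃ f, P.bounds f l

/-- Every path of length at most 3 joining `a` and `b` is a subgraph of the cycle `l`. -/
def DiagSafe (P : PlaneGraph V) (l : List V) (a b : V) : Prop :=
  ∀ p : P.graph.Walk a b, p.IsPath → p.length ≤ 3 → ∀ e ∈ p.edges, e ∈ cycleEdges l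

/-- A vertex is `C`-admissible if it is small (degree < 60) and not on `C`. -/
def Admissible (P : PlaneGraph V) (C : List V) (v : V) : Prop := P.deg v < 60 ∧ v ∉ C

def SafeTetragram (P : PlaneGraph V) (v1 v2 v3 v4 : V) : Prop :=
  P.IsFacial [v1, v2, v3, v4] ∧ P.DiagSafe [v1, v2, v3, v4] v1 v3

def SafeHexagram (P : PlaneGraph V) (v1 v2 v3 v4 v5 v6 : V) : Prop :=
  P.IsFacial [v1, v2, v3, v4, v5, v6] ∧
    ∀ p : P.graph.Walk v1 v3, p.IsPath → p.length ≤ 3 → p.support = [v1, v2, v3]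

/-- A facial 5-cycle whose first four vertices have degree 3, with `x i` the third
neighbor of `v i`. -/
def Pentagram (P : PlaneGraph V) (v1 v2 v3 v4 v5 x1 x2 x3 x4 : V) : Prop :=
  P.IsFacial [v1, v2, v3, v4, v5] ∧
  (P.deg v1 = 3 ∧ P.deg v2 = 3 ∧ P.deg v3 = 3 ∧ P.deg v4 = 3) ∧
  (P.graph.Adj v1 x1 ∧ x1 ≠ v5 ∧ x1 ≠ v2) ∧
  (P.graph.Adj v2 x2 ∧ x2 ≠ v1 ∧ x2 ≠ v3) ∧
  (P.graph.Adj v3 x3 ∧ x3 ≠ v2 ∧ x3 ≠ v4) ∧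
  (P.graph.Adj v4 x4 ∧ x4 ≠ v3 ∧ x4 ≠ v5)

def SafePentagram (P : PlaneGraph V) (v1 v2 v3 v4 v5 x1 x2 x3 x4 : V) : Prop :=
  List.Pairwise (fun a b => a ≠ b ∧ ¬P.graph.Adj a b) [x1, x2, x3, x4] ∧
  (∀ p : P.graph.Walk x2 v5, p.IsPath → p.length ≤ 3 →
      ¬∀ w ∈ p.support, w ∉ ([v1, v2, v3, v4] : List V)) ∧
  (∀ p : P.graph.Walk x3 x4, p.IsPath → p.length ≤ 3 →
      (∀ w ∈ p.support, w ∉ ([v1, v2, v3, v4] : List V)) →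
      p.length = 2 ∧ ∃ y, p.support = [x3, y, x4] ∧ P.IsFacial [x3, v3, v4, x4, y])

def SecureMonogram (P : PlaneGraph V) (C : List V) (v : V) : Prop :=
  P.deg v ≤ 2 ∧ v ∉ C

def SecureTetragram (P : PlaneGraph V) (C : List V) (v1 v2 v3 v4 : V) : Prop :=
  P.SafeTetragram v1 v2 v3 v4 ∧ P.Admissible C v1 ∧ P.deg v1 = 3 ∧
  ∀ x, P.graph.Adj v1 x → x ≠ v2 → x ≠ v4 →
    P.Admissible C x ∧
      (P.Admissible C v3 ∨
        ∀ w, P.graph.Adj x w →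
          P.Admissible C w ∨ P.IsFacial [v1, v2, w, x] ∨ P.IsFacial [v1, v4, w, x])

def SecureOctagram (P : PlaneGraph V) (C : List V) (v1 v2 v3 v4 : V) : Prop :=
  P.IsFacial [v1, v2, v3, v4] ∧
    ∀ v ∈ ([v1, v2, v3, v4] : List V), P.deg v = 3 ∧ P.Admissible C v

def SecurePentagram (P : PlaneGraph V) (C : List V) (v1 v2 v3 v4 v5 x1 x2 x3 x4 : V) : Prop :=
  P.Pentagram v1 v2 v3 v4 v5 x1 x2 x3 x4 ∧
  P.SafePentagram v1 v2 v3 v4 v5 x1 x2 x3 x4 ∧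
  (∀ v ∈ ([v1, v2, v3, v4, v5, x1, x2, x3, x4] : List V), P.Admissible C v) ∧
  ((∀ w, P.graph.Adj v5 w → P.Admissible C w) ∨ (∀ w, P.graph.Adj x2 w → P.Admissible C w)) ∧
  ((∀ w, P.graph.Adj x3 w → P.Admissible C w) ∨ (∀ w, P.graph.Adj x4 w → P.Admissible C w))

def SecureDecagram (P : PlaneGraph V) (C : List V) (v1 v2 v3 v4 v5 x1 x2 x3 x4 : V) : Prop :=
  P.Pentagram v1 v2 v3 v4 v5 x1 x2 x3 x4 ∧ P.deg v5 = 3 ∧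
  x1 ≠ x3 ∧ ¬P.graph.Adj x1 x3 ∧ (¬∃ y, P.graph.Adj x1 y ∧ P.graph.Adj y x3) ∧
  ∀ v ∈ ([v1, v2, v3, v4, v5, x1, x3] : List V), P.Admissible C v

def SecureHexagram (P : PlaneGraph V) (C : List V) (v1 v2 v3 v4 v5 v6 : V) : Prop :=
  P.SafeHexagram v1 v2 v3 v4 v5 v6 ∧
  P.Admissible C v1 ∧ P.Admissible C v3 ∧ P.Admissible C v6 ∧ P.deg v1 = 3 ∧
  ∀ x, P.graph.Adj v1 x → x ≠ v2 → x ≠ v6 → P.Admissible C x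

/-- `G` contains a `C`-secure multigram. -/
def HasSecureMultigram (P : PlaneGraph V) (C : List V) : Prop :=
  (∃ v, P.SecureMonogram C v) ∨
  (∃ v1 v2 v3 v4, P.SecureTetragram C v1 v2 v3 v4 ∨ P.SecureOctagram C v1 v2 v3 v4) ∨
  (∃ v1 v2 v3 v4 v5 x1 x2 x3 x4,
      P.SecurePentagram C v1 v2 v3 v4 v5 x1 x2 x3 x4 ∨
      P.SecureDecagram C v1 v2 v3 v4 v5 x1 x2 x3 x4) ∨
  (∃ v1 v2 v3 v4 v5 v6, P.SecureHexagram C v1 v2 v3 v4 v5 v6)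

end PlaneGraph

/-- Identify `v` with `u`: all edges at `v` are transferred to `u` (and `v` becomes
isolated); parallel edges are merged. -/
def identifyVerts {V : Type} [DecidableEq V] (G : SimpleGraph V) (u v : V) : SimpleGraph V :=
  SimpleGraph.fromRel fun a b =>
    ∃ x y, G.Adj x y ∧ (if x = v then u else x) = a ∧ (if y = v then u else y) = b

/-- Delete the vertices in `s` (they are kept as isolated vertices). -/
def deleteVerts {V : Type} (G : SimpleGraph V) (s : Set V) : SimpleGraph V :=
  SimpleGraph.fromRel fun a b => G.Adj a b ∧ a ∉ s ∧ b ∉ s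

/-- Add the edge `ab`. -/
def addEdge {V : Type} (G : SimpleGraph V) (a b : V) : SimpleGraph V :=
  G ⊔ SimpleGraph.fromRel fun x y => x = a ∧ y = b

/-- `G` can be drawn in the plane: vertices go to distinct points, edges to arcs, arcs are
simple, meet vertices only at their own endpoints, and two arcs of distinct edges meet
only at common endpoints. -/
def SimpleGraph.IsPlanar {V : Type} (G : SimpleGraph V) : Prop :=
  ∃ (pos : V → ℝ × ℝ) (arc : ∀ u v, G.Adj u v → _root_.Path (pos u) (pos v)),
    Function.Injective pos ∧
    (∀ u v (h : G.Adj u v), Function.Injective (arc u v h)) ∧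
    (∀ u v (h : G.Adj u v) (w : V), pos w ∈ Set.range (arc u v h) → w = u ∨ w = v) ∧
    (∀ u v u' v' (h : G.Adj u v) (h' : G.Adj u' v'), s(u, v) ≠ s(u', v') →
      ∀ p ∈ Set.range (arc u v h) ∩ Set.range (arc u' v' h'), ∃ w, p = pos w)

lemma third_neighbor {V : Type} [Fintype V] (G : SimpleGraph V) (v a b : V)
    (hab : a ≠ b) (ha : G.Adj v a) (hb : G.Adj v b)
    (h3 : (G.neighborSet v).ncard = 3) :
    ∃ x, G.Adj v x ∧ x ≠ a ∧ x ≠ b ∧ ∀ w, G.Adj v w → w = a ∨ w = b ∨ w = x := by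
  have hx : ∃ x ∈ G.neighborSet v, x ∉ ({a, b} : Set V) := by
    by_contra h
    push_neg at h
    have hsub : G.neighborSet v ⊆ {a, b} := h
    have h1 := Set.ncard_le_ncard hsub (Set.toFinite _)
    have h2 : ({a, b} : Set V).ncard ≤ 2 :=
      (Set.ncard_insert_le _ _).trans (by simp)
    omega
  obtain ⟨x, hxv, hxab⟩ := hx
  simp only [Set.mem_insert_iff, Set.mem_singleton_iff, not_or] at hxab
  refine ⟨x, hxv, hxab.1, hxab.2, ?_⟩
  intro w hw
  have hsub : ({a, b, x} : Set V) ⊆ G.neighborSet v := by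
    intro y hy
    rcases hy with rfl | rfl | rfl
    · exact ha
    · exact hb
    · exact hxv
  have hcard : ({a, b, x} : Set V).ncard = 3 := by
    rw [Set.ncard_insert_of_notMem (by simp [hab, Ne.symm hxab.1]),
      Set.ncard_insert_of_notMem (by simp [Ne.symm hxab.2]), Set.ncard_singleton]
  have heq : ({a, b, x} : Set V) = G.neighborSet v :=
    Set.eq_of_subset_of_ncard_le hsub (by rw [hcard, h3]) (Set.toFinite _)
  have : w ∈ ({a, b, x} : Set V) := heq ▸ hw
  simpa using this

/-- The octagram reduction: if a triangle-free plane graph has a facial 4-cycle all of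
whose vertices have degree exactly 3, then every proper 3-coloring of the graph minus
these four vertices extends to a proper 3-coloring of the whole graph. -/
theorem octagram_extension {V : Type} [Fintype V] [DecidableEq V] (P : PlaneGraph V)
    (htf : P.graph.CliqueFree 3) (v1 v2 v3 v4 : V) (hf : P.IsFacial [v1, v2, v3, v4])
    (hdeg : ∀ v ∈ ([v1, v2, v3, v4] : List V), P.deg v = 3) :
    ∀ c' : (deleteVerts P.graph {v1, v2, v3, v4}).Coloring (Fin 3),
      ∃ c : P.graph.Coloring (Fin 3),
        ∀ w, w ∉ ([v1, v2, v3, v4] : List V) → c w = c' w := by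
  intro c'
  obtain ⟨f, hb⟩ := hf
  obtain ⟨-, hnd, hch, hla⟩ := P.bounds_isCycle f _ hb
  simp only [List.Chain', List.isChain_cons_cons, List.isChain_singleton, and_true] at hch
  obtain ⟨a12, a23, a34⟩ := hch
  have a41 : P.graph.Adj v4 v1 := by simpa using hla (by simp)
  simp only [List.nodup_cons, List.mem_cons, List.mem_singleton, List.not_mem_nil,
    or_false, not_or, List.nodup_nil, and_true] at hnd
  obtain ⟨⟨ne12, ne13, ne14⟩, ⟨ne23, ne24⟩, ne34, -⟩ := hnd
  have n13 : ¬P.graph.Adj v1 v3 := fun h =>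
    htf {v1, v2, v3} (SimpleGraph.is3Clique_triple_iff.mpr ⟨a12, h, a23⟩)
  have n24 : ¬P.graph.Adj v2 v4 := fun h =>
    htf {v2, v3, v4} (SimpleGraph.is3Clique_triple_iff.mpr ⟨a23, h, a34⟩)
  obtain ⟨x1, hx1, hx1v2, hx1v4, hN1⟩ := third_neighbor P.graph v1 v2 v4 ne24
    a12 a41.symm (by simpa [PlaneGraph.deg] using hdeg v1 (by simp))
  obtain ⟨x2, hx2, hx2v1, hx2v3, hN2⟩ := third_neighbor P.graph v2 v1 v3 ne13
    a12.symm a23 (by simpa [PlaneGraph.deg] using hdeg v2 (by simp))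
  obtain ⟨x3, hx3, hx3v2, hx3v4, hN3⟩ := third_neighbor P.graph v3 v2 v4 ne24
    a23.symm a34 (by simpa [PlaneGraph.deg] using hdeg v3 (by simp))
  obtain ⟨x4, hx4, hx4v3, hx4v1, hN4⟩ := third_neighbor P.graph v4 v3 v1 (Ne.symm ne13)
    a34.symm a41 (by simpa [PlaneGraph.deg] using hdeg v4 (by simp))
  have hx1v3 : x1 ≠ v3 := fun h => n13 (h ▸ hx1)
  have hx2v4 : x2 ≠ v4 := fun h => n24 (h ▸ hx2)
  have hx3v1 : x3 ≠ v1 := fun h => n13 (h ▸ hx3).symm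
  have hx4v2 : x4 ≠ v2 := fun h => n24 (h ▸ hx4).symm
  have pick : ∀ x y : Fin 3, ∃ a : Fin 3, a ≠ x ∧ a ≠ y := by decide
  obtain ⟨a, ha1, ha3⟩ := pick (c' x1) (c' x3)
  obtain ⟨b2, hb2a, hb2f⟩ := pick a (c' x2)
  obtain ⟨b4, hb4a, hb4f⟩ := pick a (c' x4)
  set cF : V → Fin 3 := fun w =>
    if w = v1 then a else if w = v2 then b2 else if w = v3 then a
      else if w = v4 then b4 else c' w with hcF
  have hc1 : cF v1 = a := by simp [hcF]
  have hc2 : cF v2 = b2 := by simp [hcF, Ne.symm ne12]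
  have hc3 : cF v3 = a := by simp [hcF, Ne.symm ne13, Ne.symm ne23]
  have hc4 : cF v4 = b4 := by simp [hcF, Ne.symm ne14, Ne.symm ne24, Ne.symm ne34]
  have hcx : ∀ x, x ≠ v1 → x ≠ v2 → x ≠ v3 → x ≠ v4 → cF x = c' x := by
    intro x h1 h2 h3 h4
    simp [hcF, h1, h2, h3, h4]
  have hout : ∀ u w, P.graph.Adj u w →
      (u ≠ v1 ∧ u ≠ v2 ∧ u ≠ v3 ∧ u ≠ v4) →
      (w ≠ v1 ∧ w ≠ v2 ∧ w ≠ v3 ∧ w ≠ v4) → c' u ≠ c' w := by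
    intro u w huw hu hw
    apply c'.valid
    show (deleteVerts P.graph {v1, v2, v3, v4}).Adj u w
    rw [deleteVerts, SimpleGraph.fromRel_adj]
    exact ⟨huw.ne, Or.inl ⟨huw, by simp [hu.1, hu.2.1, hu.2.2.1, hu.2.2.2],
      by simp [hw.1, hw.2.1, hw.2.2.1, hw.2.2.2]⟩⟩
  have hmain : ∀ u w, P.graph.Adj u w →
      (u = v1 ∨ u = v2 ∨ u = v3 ∨ u = v4) → cF u ≠ cF w := by
    intro u w huw hu
    rcases hu with rfl | rfl | rfl | rfl
    · rcases hN1 w huw with rfl | rfl | rfl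
      · rw [hc1, hc2]; exact fun h => hb2a h.symm
      · rw [hc1, hc4]; exact fun h => hb4a h.symm
      · rw [hc1, hcx _ hx1.ne' hx1v2 hx1v3 hx1v4]; exact ha1
    · rcases hN2 w huw with rfl | rfl | rfl
      · rw [hc2, hc1]; exact hb2a
      · rw [hc2, hc3]; exact hb2a
      · rw [hc2, hcx _ hx2v1 hx2.ne' hx2v3 hx2v4]; exact hb2f
    · rcases hN3 w huw with rfl | rfl | rfl
      · rw [hc3, hc2]; exact fun h => hb2a h.symm
      · rw [hc3, hc4]; exact fun h => hb4a h.symm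
      · rw [hc3, hcx _ hx3v1 hx3v2 hx3.ne' hx3v4]; exact ha3
    · rcases hN4 w huw with rfl | rfl | rfl
      · rw [hc4, hc3]; exact hb4a
      · rw [hc4, hc1]; exact hb4a
      · rw [hc4, hcx _ hx4v1 hx4v2 hx4v3 hx4.ne']; exact hb4f
  have hval : ∀ {u w : V}, P.graph.Adj u w → cF u ≠ cF w := by
    intro u w huw
    by_cases hu : u = v1 ∨ u = v2 ∨ u = v3 ∨ u = v4
    · exact hmain u w huw hu
    · by_cases hw : w = v1 ∨ w = v2 ∨ w = v3 ∨ w = v4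
      · exact (hmain w u huw.symm hw).symm
      · push_neg at hu hw
        rw [hcx u hu.1 hu.2.1 hu.2.2.1 hu.2.2.2,
          hcx w hw.1 hw.2.1 hw.2.2.1 hw.2.2.2]
        exact hout u w huw hu hw
  refine ⟨SimpleGraph.Coloring.mk cF hval, ?_⟩
  intro w hw
  simp only [List.mem_cons, List.not_mem_nil, or_false, not_or] at hw
  exact hcx w hw.1 hw.2.1 hw.2.2.1 hw.2.2.2
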